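/- Let X and L be Hermitian positive semidefinite matrices with X positive definite and 0 ⪯ L ⪯ β X for some 0 < β < 1. For odd k, define Z_k = Σ_{i=0}^{k} X⁻¹ (-L X⁻¹)^i. Then Z_k is invertible and X + L ⪯ Z_k⁻¹ ⪯ X + (1 + δ) L, where δ = β^k (1+β)/(1-β^{k+1}). -/

import Mathlib

open Matrix Finset
open scoped ComplexOrder

private lemma conj_pow' {n : Type*} [Fintype n] [DecidableEq n] (S R A : Matrix n n ℂ)
    (hSR : S * R = 1) (hRS : R * S = 1) (i : ℕ) :
    (S * A * R) ^ i = S * A ^ i * R := by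
  induction i with
  | zero => simpa using hSR.symm
  | succ i ih =>
    have hRS' : ∀ B : Matrix n n ℂ, R * (S * B) = B := fun B => by
      rw [← Matrix.mul_assoc, hRS, Matrix.one_mul]
    rw [pow_succ, pow_succ, ih]
    simp only [Matrix.mul_assoc, hRS']

private lemma scal' (β t : ℝ) (k : ℕ) (hk : Odd k) (hβ0 : 0 < β) (hβ1 : β < 1)
    (ht0 : 0 ≤ t) (htβ : t ≤ β) :
    0 < (∑ i ∈ range (k+1), (-t)^i) ∧
    1 + t ≤ (∑ i ∈ range (k+1), (-t)^i)⁻¹ ∧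
    (∑ i ∈ range (k+1), (-t)^i)⁻¹ ≤ 1 + (1 + β^k*(1+β)/(1-β^(k+1))) * t := by
  set p : ℝ := ∑ i ∈ range (k+1), (-t)^i with hpdef
  have ht1 : t < 1 := lt_of_le_of_lt htβ hβ1
  have htk : t^(k+1) < 1 := pow_lt_one₀ ht0 ht1 k.succ_ne_zero
  have hβk : β^(k+1) < 1 := pow_lt_one₀ hβ0.le hβ1 k.succ_ne_zero
  have heven : Even (k+1) := hk.add_one
  have hgeom := geom_sum_mul (-t) (k+1)
  rw [heven.neg_pow t] at hgeom
  have hp : p * (1+t) = 1 - t^(k+1) := by rw [hpdef]; linear_combination -hgeom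
  have hprod : 0 < p * (1+t) := by rw [hp]; linarith
  have hppos : 0 < p := by nlinarith
  refine ⟨hppos, ?_, ?_⟩
  · have hk1 : 0 ≤ t^(k+1) := pow_nonneg ht0 _
    rw [← one_div, le_div_iff₀ hppos]
    nlinarith
  · have hab : t^k ≤ β^k := pow_le_pow_left₀ ht0 htβ k
    have ha0 : 0 ≤ t^k := pow_nonneg ht0 k
    have hAt : t^(k+1) = t^k * t := pow_succ t k
    have hBt : β^(k+1) = β^k * β := pow_succ β k
    set a := t^k
    set b := β^k
    set δ := b*(1+β)/(1-β^(k+1)) with hδdef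
    have hδeq : δ * (1 - b*β) = b*(1+β) := by
      rw [hδdef, hBt]; exact div_mul_cancel₀ _ (by nlinarith)
    have hδ0 : 0 ≤ δ := by
      rw [hδdef]; apply div_nonneg (by nlinarith) (by nlinarith)
    have h1 : a*(1+t) ≤ b*(1+β) := by nlinarith
    have h2 : a*t ≤ b*β := by nlinarith
    have key : a * (1+t) ≤ δ * (1 - a*t) := by
      nlinarith [mul_le_mul_of_nonneg_left h2 hδ0]
    rw [← one_div, div_le_iff₀ hppos]
    nlinarith [mul_le_mul_of_nonneg_left key ht0, hp, hAt]

theorem stmt_11 {n : Type*} [Fintype n] [DecidableEq n]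
    (X L : Matrix n n ℂ) (hX : X.PosDef) (hL : L.PosSemidef)
    (β : ℝ) (hβ0 : 0 < β) (hβ1 : β < 1)
    (hLX : (β • X - L).PosSemidef)
    (k : ℕ) (hk : Odd k) :
    IsUnit (∑ i ∈ Finset.range (k + 1), X⁻¹ * (-(L * X⁻¹)) ^ i) ∧
    ((∑ i ∈ Finset.range (k + 1), X⁻¹ * (-(L * X⁻¹)) ^ i)⁻¹ - (X + L)).PosSemidef ∧
    ((X + (1 + β ^ k * (1 + β) / (1 - β ^ (k + 1))) • L) -
        (∑ i ∈ Finset.range (k + 1), X⁻¹ * (-(L * X⁻¹)) ^ i)⁻¹).PosSemidef := by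
  classical
  -- square root of X
  set S := (open scoped MatrixOrder in CFC.sqrt X) with hSdef
  have hSps : S.PosSemidef := open scoped MatrixOrder in (CFC.sqrt_nonneg X).posSemidef
  have hSH : Sᴴ = S := hSps.1
  have hSS : S * S = X := open scoped MatrixOrder in CFC.sqrt_mul_sqrt_self X hX.posSemidef.nonneg
  have hXdet : X.det ≠ 0 := by
    have := (Matrix.isUnit_iff_isUnit_det X).mp hX.isUnit
    exact this.ne_zero
  have hSdetu : IsUnit S.det := by
    rw [isUnit_iff_ne_zero]
    intro h
    apply hXdet
    rw [← hSS, Matrix.det_mul, h, mul_zero]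
  set R := S⁻¹ with hRdef
  have hSR : S * R = 1 := Matrix.mul_nonsing_inv S hSdetu
  have hRS : R * S = 1 := Matrix.nonsing_inv_mul S hSdetu
  have hRH : Rᴴ = R := by rw [hRdef, Matrix.conjTranspose_nonsing_inv, hSH]
  have hSR' : ∀ B : Matrix n n ℂ, S * (R * B) = B := fun B => by
    rw [← Matrix.mul_assoc, hSR, Matrix.one_mul]
  have hRS' : ∀ B : Matrix n n ℂ, R * (S * B) = B := fun B => by
    rw [← Matrix.mul_assoc, hRS, Matrix.one_mul]
  -- M = R L R
  set M := R * L * R with hMdef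
  have hMps : M.PosSemidef := by
    have := hL.mul_mul_conjTranspose_same R
    rwa [hRH] at this
  have hMH : M.IsHermitian := hMps.1
  -- spectral decomposition
  set U : Matrix n n ℂ := (Matrix.IsHermitian.eigenvectorUnitary hMH : Matrix n n ℂ) with hUdef
  set d : n → ℝ := hMH.eigenvalues with hddef
  have hU1 : U * star U = 1 :=
    Matrix.mem_unitaryGroup_iff.mp (Matrix.IsHermitian.eigenvectorUnitary hMH).2
  have hU2 : star U * U = 1 :=
    Matrix.mem_unitaryGroup_iff'.mp (Matrix.IsHermitian.eigenvectorUnitary hMH).2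
  have hU1' : ∀ B : Matrix n n ℂ, U * (star U * B) = B := fun B => by
    rw [← Matrix.mul_assoc, hU1, Matrix.one_mul]
  have hU2' : ∀ B : Matrix n n ℂ, star U * (U * B) = B := fun B => by
    rw [← Matrix.mul_assoc, hU2, Matrix.one_mul]
  have hspec : M = U * Matrix.diagonal (fun j => (d j : ℂ)) * star U := by
    have := hMH.spectral_theorem
    rw [Unitary.conjStarAlgAut_apply] at this
    exact this
  -- eigenvalue bounds
  have hd0 : ∀ j, 0 ≤ d j := fun j => hMps.eigenvalues_nonneg j
  have hBMps : (β • (1 : Matrix n n ℂ) - M).PosSemidef := by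
    have h1 : R * (β • X - L) * R = β • (1 : Matrix n n ℂ) - M := by
      rw [Matrix.mul_sub, Matrix.sub_mul, hMdef]
      congr 1
      rw [Matrix.mul_smul, Matrix.smul_mul]
      congr 1
      rw [← hSS]
      simp only [Matrix.mul_assoc, hRS']
      exact hSR
    have := hLX.mul_mul_conjTranspose_same R
    rwa [hRH, h1] at this
  have hdiagB : star U * (β • (1 : Matrix n n ℂ) - M) * U
      = Matrix.diagonal (fun j => ((β - d j : ℝ) : ℂ)) := by
    rw [Matrix.mul_sub, Matrix.sub_mul, hspec]
    simp only [Matrix.mul_assoc, hU2', Matrix.mul_smul, Matrix.smul_mul, Matrix.mul_one,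
      Matrix.one_mul, hU2]
    rw [← Matrix.diagonal_one, ← Matrix.diagonal_smul, Matrix.diagonal_sub]
    congr 1
    funext j
    push_cast
    simp [Complex.real_smul]
  have hdβ : ∀ j, d j ≤ β := by
    intro j
    have h2 := hBMps.conjTranspose_mul_mul_same U
    rw [← Matrix.star_eq_conjTranspose, hdiagB] at h2
    have := Matrix.posSemidef_diagonal_iff.mp h2 j
    rw [Complex.zero_le_real] at this
    linarith
  -- scalar facts
  set δ := β ^ k * (1 + β) / (1 - β ^ (k + 1)) with hδdef
  set p : n → ℝ := fun j => ∑ i ∈ range (k+1), (-(d j))^i with hpdef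
  have hscal : ∀ j, 0 < p j ∧ 1 + d j ≤ (p j)⁻¹ ∧ (p j)⁻¹ ≤ 1 + (1 + δ) * d j :=
    fun j => scal' β (d j) k hk hβ0 hβ1 (hd0 j) (hdβ j)
  have hpne : ∀ j, ((p j : ℝ) : ℂ) ≠ 0 := fun j =>
    Complex.ofReal_ne_zero.mpr (hscal j).1.ne'
  -- P and its diagonalization
  set P : Matrix n n ℂ := ∑ i ∈ range (k+1), (-M)^i with hPdef
  have hnegM : -M = U * Matrix.diagonal (fun j => -(d j : ℂ)) * star U := by
    rw [hspec, ← Matrix.diagonal_neg, Matrix.mul_neg, Matrix.neg_mul]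
  have hPdiag : P = U * Matrix.diagonal (fun j => ((p j : ℝ) : ℂ)) * star U := by
    rw [hPdef]
    have hterm : ∀ i, (-M)^i
        = U * Matrix.diagonal (fun j => (-(d j : ℂ))^i) * star U := by
      intro i
      rw [hnegM, conj_pow' U (star U) _ hU1 hU2, Matrix.diagonal_pow]
      rfl
    rw [Finset.sum_congr rfl (fun i _ => hterm i)]
    rw [← Finset.sum_mul, ← Finset.mul_sum]
    congr 1
    congr 1
    ext a b
    by_cases hab : a = b
    · subst hab
      simp [Matrix.sum_apply, Matrix.diagonal_apply_eq, hpdef]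
    · simp [Matrix.sum_apply, Matrix.diagonal_apply_ne _ hab]
  set Q : Matrix n n ℂ := U * Matrix.diagonal (fun j => ((p j : ℝ) : ℂ)⁻¹) * star U
    with hQdef
  have hPQ : P * Q = 1 := by
    rw [hPdiag, hQdef]
    simp only [Matrix.mul_assoc, hU2']
    rw [← Matrix.mul_assoc (Matrix.diagonal _), Matrix.diagonal_mul_diagonal]
    have : (fun j => ((p j : ℝ) : ℂ) * ((p j : ℝ) : ℂ)⁻¹) = fun _ => (1:ℂ) := by
      funext j; exact mul_inv_cancel₀ (hpne j)
    rw [this, Matrix.diagonal_one, Matrix.one_mul, hU1]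
  have hPQ' : ∀ B : Matrix n n ℂ, P * (Q * B) = B := fun B => by
    rw [← Matrix.mul_assoc, hPQ, Matrix.one_mul]
  -- the matrix Z
  have hXinv : X⁻¹ = R * R := by rw [← hSS, Matrix.mul_inv_rev]
  have hLXinv : -(L * X⁻¹) = S * (-M) * R := by
    rw [hXinv, hMdef, Matrix.mul_neg, Matrix.neg_mul]
    congr 1
    simp only [Matrix.mul_assoc, hSR']
  have hZ : (∑ i ∈ Finset.range (k + 1), X⁻¹ * (-(L * X⁻¹)) ^ i) = R * P * R := by
    have hterm : ∀ i, X⁻¹ * (-(L * X⁻¹)) ^ i = R * ((-M)^i * R) := by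
      intro i
      rw [hLXinv, conj_pow' S R _ hSR hRS, hXinv]
      simp only [Matrix.mul_assoc, hRS']
    rw [Finset.sum_congr rfl (fun i _ => hterm i), ← Finset.mul_sum, ← Finset.sum_mul,
      ← Matrix.mul_assoc, hPdef]
  set W : Matrix n n ℂ := S * Q * S with hWdef
  have hZW : (R * P * R) * W = 1 := by
    rw [hWdef]
    simp only [Matrix.mul_assoc, hRS', hPQ']
    exact hRS
  have hunit : IsUnit (∑ i ∈ Finset.range (k + 1), X⁻¹ * (-(L * X⁻¹)) ^ i) := by
    rw [hZ]; exact (Matrix.isUnit_iff_isUnit_det _).mpr (Matrix.isUnit_det_of_right_inverse hZW)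
  have hZinv : (∑ i ∈ Finset.range (k + 1), X⁻¹ * (-(L * X⁻¹)) ^ i)⁻¹ = W := by
    rw [hZ]; exact Matrix.inv_eq_right_inv hZW
  -- conjugation identities
  have hL' : S * M * S = L := by
    rw [hMdef]
    simp only [Matrix.mul_assoc, hSR', hRS, Matrix.mul_one]
  refine ⟨hunit, ?_, ?_⟩
  · -- lower bound
    rw [hZinv]
    have e : W - (X + L) = S * (Q - (1 + M)) * S := by
      rw [Matrix.mul_sub, Matrix.sub_mul, Matrix.mul_add, Matrix.add_mul,
        Matrix.mul_one, hSS, hWdef, hL']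
    have hsum : (1 : Matrix n n ℂ) + M
        = U * (Matrix.diagonal (fun j => 1 + (d j : ℂ))) * star U := by
      rw [hspec,
        show Matrix.diagonal (fun j => 1 + (d j : ℂ))
          = Matrix.diagonal (fun _ : n => (1:ℂ)) + Matrix.diagonal (fun j => (d j : ℂ)) by
            rw [Matrix.diagonal_add],
        Matrix.mul_add, Matrix.add_mul]
      congr 1
      rw [Matrix.diagonal_one, Matrix.mul_one, hU1]
    have hdiff : Q - (1 + M)
        = U * Matrix.diagonal (fun j => ((p j : ℝ) : ℂ)⁻¹ - (1 + (d j : ℂ))) * star U := by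
      rw [hQdef, hsum,
        show Matrix.diagonal (fun j => ((p j : ℝ) : ℂ)⁻¹ - (1 + (d j : ℂ)))
          = Matrix.diagonal (fun j => ((p j : ℝ) : ℂ)⁻¹)
            - Matrix.diagonal (fun j => 1 + (d j : ℂ)) by rw [Matrix.diagonal_sub],
        Matrix.mul_sub, Matrix.sub_mul]
    have hposin : (Matrix.diagonal
        (fun j => ((p j : ℝ) : ℂ)⁻¹ - (1 + (d j : ℂ)))).PosSemidef := by
      refine Matrix.posSemidef_diagonal_iff.mpr fun j => ?_
      have hc : ((p j : ℝ) : ℂ)⁻¹ - (1 + (d j : ℂ)) = (((p j)⁻¹ - (1 + d j) : ℝ) : ℂ) := by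
        push_cast; ring
      rw [hc, Complex.zero_le_real]
      have := (hscal j).2.1
      linarith
    have h2 := hposin.mul_mul_conjTranspose_same U
    rw [← Matrix.star_eq_conjTranspose] at h2
    have h3 : (Q - (1 + M)).PosSemidef := by rw [hdiff]; exact h2
    have h4 := h3.mul_mul_conjTranspose_same S
    rw [e]
    rwa [hSH] at h4
  · -- upper bound
    rw [hZinv]
    set c : ℂ := ((1 + δ : ℝ) : ℂ) with hcdef
    have hsm : (1 + δ) • L = c • L := by
      ext i j
      simp [hcdef, Complex.real_smul]
    rw [hsm]
    have e2 : (X + c • L) - W = S * ((1 + c • M) - Q) * S := by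
      simp only [Matrix.mul_sub, Matrix.sub_mul, Matrix.mul_add, Matrix.add_mul,
        Matrix.mul_one, Matrix.mul_smul, Matrix.smul_mul, hSS, hL', hWdef]
    rw [e2]
    have hsmulM : c • M = U * Matrix.diagonal (fun j => c * (d j : ℂ)) * star U := by
      rw [hspec, Matrix.mul_assoc, ← Matrix.mul_smul, ← Matrix.smul_mul,
        show c • Matrix.diagonal (fun j => (d j : ℂ))
          = Matrix.diagonal (fun j => c * (d j : ℂ)) by
            rw [← Matrix.diagonal_smul]; rfl,
        ← Matrix.mul_assoc]
    have hsum2 : (1 : Matrix n n ℂ) + c • M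
        = U * (Matrix.diagonal (fun j => 1 + c * (d j : ℂ))) * star U := by
      rw [hsmulM,
        show Matrix.diagonal (fun j => 1 + c * (d j : ℂ))
          = Matrix.diagonal (fun _ : n => (1:ℂ)) + Matrix.diagonal (fun j => c * (d j : ℂ)) by
            rw [Matrix.diagonal_add],
        Matrix.mul_add, Matrix.add_mul]
      congr 1
      rw [Matrix.diagonal_one, Matrix.mul_one, hU1]
    have hdiff2 : (1 + c • M) - Q
        = U * Matrix.diagonal (fun j => (1 + c * (d j : ℂ)) - ((p j : ℝ) : ℂ)⁻¹) * star U := by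
      rw [hQdef, hsum2,
        show Matrix.diagonal (fun j => (1 + c * (d j : ℂ)) - ((p j : ℝ) : ℂ)⁻¹)
          = Matrix.diagonal (fun j => 1 + c * (d j : ℂ))
            - Matrix.diagonal (fun j => ((p j : ℝ) : ℂ)⁻¹) by rw [Matrix.diagonal_sub],
        Matrix.mul_sub, Matrix.sub_mul]
    have hposin2 : (Matrix.diagonal
        (fun j => (1 + c * (d j : ℂ)) - ((p j : ℝ) : ℂ)⁻¹)).PosSemidef := by
      refine Matrix.posSemidef_diagonal_iff.mpr fun j => ?_
      have hc : (1 + c * (d j : ℂ)) - ((p j : ℝ) : ℂ)⁻¹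
          = (((1 + (1 + δ) * d j) - (p j)⁻¹ : ℝ) : ℂ) := by
        rw [hcdef]; push_cast; ring
      rw [hc, Complex.zero_le_real]
      have := (hscal j).2.2
      linarith
    have h2 := hposin2.mul_mul_conjTranspose_same U
    rw [← Matrix.star_eq_conjTranspose] at h2
    have h3 : ((1 + c • M) - Q).PosSemidef := by rw [hdiff2]; exact h2
    have h4 := h3.mul_mul_conjTranspose_same S
    rwa [hSH] at h4
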